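/- Let n ≥ 2 and λ > 0, and define v_0 : ℝ^{n+1}_+ → ℝ by v_0(z̄, z_{n+1}) = (2λ/(|z̄|² + (z_{n+1} + λ)²))^{(n-1)/2}. Then v_0 is harmonic in the open upper half-space {z_{n+1} > 0}, and on the boundary it satisfies (2/(n-1))·(∂v_0/∂z_{n+1})(z̄, 0) + v_0(z̄, 0)^{(n+1)/(n-1)} = 0 for every z̄ ∈ ℝⁿ. -/

import Mathlib

open MeasureTheory Metric Filter

noncomputable section

/-- The Euclidean Laplacian of a function on `ℝ^m`. -/
def lap {m : ℕ} (u : EuclideanSpace ℝ (Fin m) → ℝ) (x : EuclideanSpace ℝ (Fin m)) : ℝ :=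
  ∑ i, fderiv ℝ (fun y => fderiv ℝ u y (EuclideanSpace.single i 1)) x (EuclideanSpace.single i 1)

/-- The standard bubble `v₀(z̄, z_{n+1}) = (2λ/(|z̄|² + (z_{n+1} + λ)²))^{(n-1)/2}`. -/
def bubble (n : ℕ) (lam : ℝ) (z : EuclideanSpace ℝ (Fin (n + 1))) : ℝ :=
  (2 * lam / ((∑ i : Fin n, z (Fin.castSucc i) ^ 2) + (z (Fin.last n) + lam) ^ 2)) ^
    (((n : ℝ) - 1) / 2)

namespace BubbleAux

open Real

variable {m : ℕ}

/-- squared distance to `p`, coordinatewise. -/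
def qq (p z : EuclideanSpace ℝ (Fin m)) : ℝ := ∑ i, (z i - p i) * (z i - p i)

lemma qq_nonneg (p z : EuclideanSpace ℝ (Fin m)) : 0 ≤ qq p z :=
  Finset.sum_nonneg fun _ _ => mul_self_nonneg _

lemma continuous_qq (p : EuclideanSpace ℝ (Fin m)) : Continuous (qq p) :=
  continuous_finset_sum _ fun i _ =>
    (((EuclideanSpace.proj i).continuous.sub continuous_const).mul
      ((EuclideanSpace.proj i).continuous.sub continuous_const))

/-- Fréchet derivative of `qq p`. -/
def Dq (p z : EuclideanSpace ℝ (Fin m)) : EuclideanSpace ℝ (Fin m) →L[ℝ] ℝ :=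
  ∑ i, (2 * (z i - p i)) • (EuclideanSpace.proj i : EuclideanSpace ℝ (Fin m) →L[ℝ] ℝ)

lemma Dq_apply (p z : EuclideanSpace ℝ (Fin m)) (j : Fin m) :
    Dq p z (EuclideanSpace.single j 1) = 2 * (z j - p j) := by
  simp [Dq, ContinuousLinearMap.sum_apply, PiLp.proj_apply,
    EuclideanSpace.single_apply, Finset.sum_ite_eq]

lemma hasFDerivAt_coord (p : EuclideanSpace ℝ (Fin m)) (i : Fin m) (z : EuclideanSpace ℝ (Fin m)) :
    HasFDerivAt (fun z : EuclideanSpace ℝ (Fin m) => z i - p i)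
      (EuclideanSpace.proj i : EuclideanSpace ℝ (Fin m) →L[ℝ] ℝ) z := by
  have h := ((EuclideanSpace.proj (𝕜 := ℝ) i).hasFDerivAt (x := z)).sub_const (p i)
  exact h

lemma hasFDerivAt_qq (p z : EuclideanSpace ℝ (Fin m)) :
    HasFDerivAt (qq p) (Dq p z) z := by
  have h : HasFDerivAt (fun z : EuclideanSpace ℝ (Fin m) => ∑ i, (z i - p i) * (z i - p i))
      (∑ i, ((z i - p i) • (EuclideanSpace.proj i : EuclideanSpace ℝ (Fin m) →L[ℝ] ℝ) +
        (z i - p i) • (EuclideanSpace.proj i : EuclideanSpace ℝ (Fin m) →L[ℝ] ℝ))) z :=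
    HasFDerivAt.fun_sum fun i _ => (hasFDerivAt_coord p i z).fun_mul (hasFDerivAt_coord p i z)
  convert h using 1
  · rfl
  unfold Dq
  refine Finset.sum_congr rfl fun i _ => ?_
  rw [two_mul, add_smul]

lemma hasFDerivAt_rpow_qq (p z : EuclideanSpace ℝ (Fin m)) (c : ℝ) (hq : 0 < qq p z) :
    HasFDerivAt (fun y => qq p y ^ c) ((c * qq p z ^ (c - 1)) • Dq p z) z :=
  (Real.hasDerivAt_rpow_const (p := c) (Or.inl hq.ne')).comp_hasFDerivAt z (hasFDerivAt_qq p z)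

lemma hasFDerivAt_f (p z : EuclideanSpace ℝ (Fin m)) (K c : ℝ) (hq : 0 < qq p z) :
    HasFDerivAt (fun y => K * qq p y ^ c) ((K * (c * qq p z ^ (c - 1))) • Dq p z) z := by
  have := (hasFDerivAt_rpow_qq p z c hq).const_mul K
  rwa [smul_smul] at this

lemma fderiv_f_apply (p z : EuclideanSpace ℝ (Fin m)) (K c : ℝ) (hq : 0 < qq p z) (j : Fin m) :
    fderiv ℝ (fun y => K * qq p y ^ c) z (EuclideanSpace.single j 1)
      = K * (c * qq p z ^ (c - 1)) * (2 * (z j - p j)) := by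
  rw [(hasFDerivAt_f p z K c hq).fderiv]
  simp [Dq_apply, mul_assoc]

lemma eventually_pos (p z : EuclideanSpace ℝ (Fin m)) (hq : 0 < qq p z) :
    ∀ᶠ y in nhds z, 0 < qq p y :=
  ((continuous_qq p).tendsto z).eventually (eventually_gt_nhds hq)

/-- The second derivative term in direction `j`. -/
lemma second_deriv (p z : EuclideanSpace ℝ (Fin m)) (K c : ℝ) (hq : 0 < qq p z) (j : Fin m) :
    fderiv ℝ (fun y => fderiv ℝ (fun y => K * qq p y ^ c) y (EuclideanSpace.single j 1)) z
        (EuclideanSpace.single j 1)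
      = K * c * (2 * qq p z ^ (c - 1) + 4 * (c - 1) * qq p z ^ (c - 2) * ((z j - p j) * (z j - p j))) := by
  have hev : (fun y => (K * c) * (qq p y ^ (c - 1) * (2 * (y j - p j))))
      =ᶠ[nhds z] (fun y => fderiv ℝ (fun y => K * qq p y ^ c) y (EuclideanSpace.single j 1)) := by
    filter_upwards [eventually_pos p z hq] with y hy
    rw [fderiv_f_apply p y K c hy j]; ring
  rw [← hev.fderiv_eq]
  have h1 : HasFDerivAt (fun y => qq p y ^ (c - 1))
      (((c - 1) * qq p z ^ (c - 1 - 1)) • Dq p z) z := hasFDerivAt_rpow_qq p z (c - 1) hq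
  have h2 : HasFDerivAt (fun y : EuclideanSpace ℝ (Fin m) => 2 * (y j - p j))
      ((2 : ℝ) • (EuclideanSpace.proj j : EuclideanSpace ℝ (Fin m) →L[ℝ] ℝ)) z :=
    (hasFDerivAt_coord p j z).const_mul 2
  have h3 := (h1.fun_mul h2).const_mul (K * c)
  rw [h3.fderiv]
  have e1 : (EuclideanSpace.proj j : EuclideanSpace ℝ (Fin m) →L[ℝ] ℝ)
      (EuclideanSpace.single j 1) = 1 := by
    simp [PiLp.proj_apply, EuclideanSpace.single_apply]
  simp only [ContinuousLinearMap.smul_apply, ContinuousLinearMap.add_apply, Dq_apply, e1,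
    smul_eq_mul]
  have h4 : c - 1 - 1 = c - 2 := by ring
  rw [h4]; ring

lemma lap_f (p z : EuclideanSpace ℝ (Fin m)) (K c : ℝ) (hq : 0 < qq p z) :
    lap (fun y => K * qq p y ^ c) z
      = K * c * (2 * m + 4 * (c - 1)) * qq p z ^ (c - 1) := by
  unfold lap
  rw [Finset.sum_congr rfl fun j _ => second_deriv p z K c hq j]
  have step : ∀ j : Fin m,
      K * c * (2 * qq p z ^ (c - 1) + 4 * (c - 1) * qq p z ^ (c - 2) * ((z j - p j) * (z j - p j)))
      = K * c * 2 * qq p z ^ (c - 1)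
        + (K * c * 4 * (c - 1) * qq p z ^ (c - 2)) * ((z j - p j) * (z j - p j)) := fun j => by ring
  rw [Finset.sum_congr rfl fun j _ => step j, Finset.sum_add_distrib, Finset.sum_const,
    ← Finset.mul_sum]
  have hw : (∑ j : Fin m, (z j - p j) * (z j - p j)) = qq p z := rfl
  have hq2 : qq p z ^ (c - 2) * qq p z = qq p z ^ (c - 1) := by
    have h := Real.rpow_add hq (c - 2) 1
    rw [Real.rpow_one] at h
    rw [← h]; ring_nf
  rw [hw, Finset.card_univ, Fintype.card_fin, nsmul_eq_mul]
  linear_combination (K * c * 4 * (c - 1)) * hq2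

end BubbleAux

open BubbleAux Real
/-- **The standard bubble solves the limit problem.** For `λ > 0`, the function
`v₀(z̄, z_{n+1}) = (2λ/(|z̄|² + (z_{n+1} + λ)²))^{(n-1)/2}` is harmonic in the open upper
half-space, and on the boundary `{z_{n+1} = 0}` it satisfies
`(2/(n-1)) ∂v₀/∂z_{n+1} + v₀^{(n+1)/(n-1)} = 0`. -/
theorem bubble_harmonic_and_boundary_equation
    (n : ℕ) (hn : 2 ≤ n) (lam : ℝ) (hlam : 0 < lam) :
    (∀ z : EuclideanSpace ℝ (Fin (n + 1)), 0 < z (Fin.last n) → lap (bubble n lam) z = 0) ∧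
    (∀ z : EuclideanSpace ℝ (Fin (n + 1)), z (Fin.last n) = 0 →
      (2 / ((n : ℝ) - 1)) *
          fderiv ℝ (bubble n lam) z (EuclideanSpace.single (Fin.last n) 1) +
        bubble n lam z ^ (((n : ℝ) + 1) / ((n : ℝ) - 1)) = 0) := by
  set p : EuclideanSpace ℝ (Fin (n + 1)) := EuclideanSpace.single (Fin.last n) (-lam) with hp
  have hplast : p (Fin.last n) = -lam := by
    simp [hp, EuclideanSpace.single_apply]
  have hpcast : ∀ i : Fin n, p (Fin.castSucc i) = 0 := fun i => by
    simp [hp, EuclideanSpace.single_apply, (Fin.castSucc_lt_last i).ne]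
  have h2l : (0:ℝ) < 2 * lam := by linarith
  have hnR : (2:ℝ) ≤ (n : ℝ) := by exact_mod_cast hn
  have hne : (n : ℝ) - 1 ≠ 0 := by linarith
  set a : ℝ := ((n : ℝ) - 1) / 2 with ha
  set c : ℝ := -a with hc
  set K : ℝ := (2 * lam) ^ a with hK
  -- the denominator equals qq p z
  have hQ : ∀ z : EuclideanSpace ℝ (Fin (n + 1)),
      (∑ i : Fin n, z (Fin.castSucc i) ^ 2) + (z (Fin.last n) + lam) ^ 2 = qq p z := by
    intro z
    unfold qq
    rw [Fin.sum_univ_castSucc]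
    congr 1
    · refine Finset.sum_congr rfl fun i _ => ?_
      rw [hpcast i]; ring
    · rw [hplast]; ring
  have hbub : bubble n lam = fun z => K * qq p z ^ c := by
    funext z
    unfold bubble
    rw [hQ z, div_rpow (le_of_lt h2l) (qq_nonneg p z), ← ha, hc, Real.rpow_neg (qq_nonneg p z),
      div_eq_mul_inv, hK]
  -- positivity of qq near the half-space
  have hqpos : ∀ z : EuclideanSpace ℝ (Fin (n + 1)), 0 ≤ z (Fin.last n) → 0 < qq p z := by
    intro z hz
    have hterm : (z (Fin.last n) - p (Fin.last n)) * (z (Fin.last n) - p (Fin.last n)) ≤ qq p z :=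
      Finset.single_le_sum (f := fun i : Fin (n + 1) => (z i - p i) * (z i - p i))
        (fun i _ => mul_self_nonneg _) (Finset.mem_univ _)
    have : 0 < (z (Fin.last n) - p (Fin.last n)) * (z (Fin.last n) - p (Fin.last n)) := by
      rw [hplast]
      have : 0 < z (Fin.last n) + lam := by linarith
      nlinarith
    linarith
  constructor
  · intro z hz
    rw [hbub, lap_f p z K c (hqpos z hz.le)]
    have : 2 * ((n : ℝ) + 1) + 4 * (c - 1) = 0 := by
      rw [hc, ha]; ring
    push_cast
    rw [this]
    ring
  · intro z hz
    have hq := hqpos z (le_of_eq hz.symm)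
    rw [hbub, fderiv_f_apply p z K c hq (Fin.last n)]
    have hzp : z (Fin.last n) - p (Fin.last n) = lam := by rw [hplast, hz]; ring
    rw [hzp]
    -- rewrite the rpow of the bubble
    have hqc : (0:ℝ) < qq p z ^ c := Real.rpow_pos_of_pos hq c
    set b : ℝ := ((n : ℝ) + 1) / ((n : ℝ) - 1) with hb
    have hsplit : (K * qq p z ^ c) ^ b = (2 * lam) ^ (a * b) * qq p z ^ (c * b) := by
      rw [hK, Real.mul_rpow (Real.rpow_pos_of_pos h2l a).le hqc.le,
        ← Real.rpow_mul h2l.le, ← Real.rpow_mul hq.le]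
    rw [hsplit]
    have hab : a * b = ((n : ℝ) + 1) / 2 := by
      rw [ha, hb]; field_simp
    have hcb : c * b = -(((n : ℝ) + 1) / 2) := by
      rw [hc, ha, hb]; field_simp
    have hc1 : c - 1 = -(((n : ℝ) + 1) / 2) := by
      rw [hc, ha]; ring
    rw [hab, hcb, hc1]
    have hK2 : (2 * lam) ^ (((n : ℝ) + 1) / 2) = K * (2 * lam) := by
      rw [hK, show ((n : ℝ) + 1) / 2 = ((n : ℝ) - 1) / 2 + 1 by ring, Real.rpow_add h2l,
        Real.rpow_one, ha]
    rw [hK2]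
    have hcoef : (2 / ((n : ℝ) - 1)) * c = -1 := by
      rw [hc, ha]; field_simp
    set Q : ℝ := qq p z ^ (-(((n : ℝ) + 1) / 2)) with hQ'
    have : 2 / ((n : ℝ) - 1) * (K * (c * Q) * (2 * lam)) = (2 / ((n : ℝ) - 1) * c) * (K * (2 * lam) * Q) := by ring
    rw [this, hcoef]
    ring
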